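/- Collision (bad-event) bound for LRW transcripts (from the proof of Theorem 8 of the paper): Let K be a nonempty finite set of hash keys and h : K × 𝒯 → V a family that is 2^{-n}-XOR universal, i.e. for all tweaks τ ≠ τ' and every z ∈ V, 2^n · |{k' ∈ K : h(k', τ) ⊕ h(k', τ') = z}| ≤ |K|. Let (τ₁, x₁, y₁), …, (τ_j, x_j, y_j) be a transcript such that for all a ≠ b with τ_a = τ_b one has x_a ≠ x_b and y_a ≠ y_b. Then the number of keys k' ∈ K for which the bad event Bad_j occurs — namely, there exist a ≠ b with x_a ⊕ h(k', τ_a) = x_b ⊕ h(k', τ_b) or y_a ⊕ h(k', τ_a) = y_b ⊕ h(k', τ_b) — satisfies 2^n · |{k' ∈ K : Bad_j}| ≤ j² · |K|. Equivalently, for a uniformly random k' ∈ K, Pr[Bad_j] ≤ j²/2^n. -/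

import Mathlib

private lemma ncard_biUnion_le' {α β : Type*} [Fintype β] (s : Finset α) (f : α → Set β) :
    (⋃ a ∈ s, f a).ncard ≤ ∑ a ∈ s, (f a).ncard := by
  classical
  induction s using Finset.induction_on with
  | empty => simp
  | insert a s hnot ih =>
    rw [Finset.set_biUnion_insert, Finset.sum_insert hnot]
    exact le_trans (Set.ncard_union_le _ _) (by omega)

private lemma key_iff {G : Type*} [AddCommGroup G] (hG : ∀ g : G, g + g = 0)
    (a b u v : G) : a + u = b + v ↔ u + v = a + b := by
  constructor
  · intro H
    have h1 : u + v = (a + (a + u)) + v := by rw [← add_assoc, hG, zero_add]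
    rw [H] at h1
    rw [h1, add_assoc, add_assoc, hG, add_zero]
  · intro H
    have h2 : a + u = a + (u + (v + v)) := by rw [hG, add_zero]
    rw [h2, ← add_assoc u v v, ← add_assoc a (u + v) v, H, ← add_assoc a a b, hG, zero_add]

/-- Collision (bad-event) bound for LRW transcripts (from the proof of Theorem 8):
if the hash family `h : K × 𝒯 → V` is `2^{-n}`-XOR universal and the transcript
`(τ_i, x_i, y_i)` has distinct inputs and distinct outputs at equal tweaks, then the
number of hash keys for which some collision `x_a ⊕ h(k', τ_a) = x_b ⊕ h(k', τ_b)`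
or `y_a ⊕ h(k', τ_a) = y_b ⊕ h(k', τ_b)` (with `a ≠ b`) occurs satisfies
`2^n · |{k' : Bad_j}| ≤ j² · |K|`, i.e. `Pr[Bad_j] ≤ j²/2^n` for uniform `k'`. -/
theorem lrw_bad_event_bound {n j : ℕ} (hn : 1 ≤ n) {𝒯 K : Type*}
    [Fintype K] [Nonempty K]
    (h : K → 𝒯 → Fin n → ZMod 2)
    (hxu : ∀ τ τ' : 𝒯, τ ≠ τ' → ∀ z : Fin n → ZMod 2,
      2 ^ n * Set.ncard {k' : K | h k' τ + h k' τ' = z} ≤ Fintype.card K)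
    (τ : ℕ → 𝒯) (x y : ℕ → Fin n → ZMod 2)
    (htr : ∀ a b, 1 ≤ a → a ≤ j → 1 ≤ b → b ≤ j → a ≠ b → τ a = τ b →
      x a ≠ x b ∧ y a ≠ y b) :
    2 ^ n * Set.ncard {k' : K | ∃ a b, 1 ≤ a ∧ a ≤ j ∧ 1 ≤ b ∧ b ≤ j ∧ a ≠ b ∧
        (x a + h k' (τ a) = x b + h k' (τ b) ∨
          y a + h k' (τ a) = y b + h k' (τ b))} ≤
      j ^ 2 * Fintype.card K := by
  classical
  have hadd : ∀ g : Fin n → ZMod 2, g + g = 0 := by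
    intro g; funext i
    have : ∀ z : ZMod 2, z + z = 0 := by decide
    exact this _
  set P : Finset (ℕ × ℕ) := (Finset.Icc 1 j).offDiag with hP
  set T : ℕ × ℕ → Set K := fun p =>
    if p.1 < p.2 then {k | x p.1 + h k (τ p.1) = x p.2 + h k (τ p.2)}
    else {k | y p.1 + h k (τ p.1) = y p.2 + h k (τ p.2)} with hT
  -- subset
  have hsub : {k' : K | ∃ a b, 1 ≤ a ∧ a ≤ j ∧ 1 ≤ b ∧ b ≤ j ∧ a ≠ b ∧
        (x a + h k' (τ a) = x b + h k' (τ b) ∨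
          y a + h k' (τ a) = y b + h k' (τ b))} ⊆ ⋃ p ∈ P, T p := by
    intro k hk
    obtain ⟨a, b, ha1, haj, hb1, hbj, hab, hcol⟩ := hk
    have hamem : a ∈ Finset.Icc 1 j := Finset.mem_Icc.2 ⟨ha1, haj⟩
    have hbmem : b ∈ Finset.Icc 1 j := Finset.mem_Icc.2 ⟨hb1, hbj⟩
    have hmemab : (a, b) ∈ P := Finset.mem_offDiag.2 ⟨hamem, hbmem, hab⟩
    have hmemba : (b, a) ∈ P := Finset.mem_offDiag.2 ⟨hbmem, hamem, hab.symm⟩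
    rcases hcol with hx | hy
    · rcases lt_or_gt_of_ne hab with hlt | hgt
      · exact Set.mem_biUnion hmemab (by simp [hT, hlt, hx])
      · exact Set.mem_biUnion hmemba (by simp [hT, hgt, hx.symm])
    · rcases lt_or_gt_of_ne hab with hlt | hgt
      · exact Set.mem_biUnion hmemba (by simp [hT, not_lt_of_gt hlt, hy.symm])
      · exact Set.mem_biUnion hmemab (by simp [hT, not_lt_of_gt hgt, hy])
  -- per-pair bound
  have hbound : ∀ p ∈ P, 2 ^ n * (T p).ncard ≤ Fintype.card K := by
    rintro ⟨a, b⟩ hp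
    obtain ⟨hamem, hbmem, hab⟩ := Finset.mem_offDiag.1 hp
    obtain ⟨ha1, haj⟩ := Finset.mem_Icc.1 hamem
    obtain ⟨hb1, hbj⟩ := Finset.mem_Icc.1 hbmem
    by_cases hτ : τ a = τ b
    · have hxy := htr a b ha1 haj hb1 hbj hab hτ
      have : T (a, b) = ∅ := by
        by_cases hlt : a < b <;>
          · simp only [hT, hlt, if_true, if_false]
            ext k
            simp only [Set.mem_setOf_eq, Set.mem_empty_iff_false, iff_false]
            rw [hτ]
            intro H
            exact absurd (add_right_cancel H) (by tauto)
      simp [this]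
    · by_cases hlt : a < b
      · have : T (a, b) = {k | h k (τ a) + h k (τ b) = x a + x b} := by
          simp only [hT, hlt, if_true]
          ext k
          simp only [Set.mem_setOf_eq]
          exact key_iff hadd _ _ _ _
        rw [this]
        exact hxu _ _ hτ _
      · have : T (a, b) = {k | h k (τ a) + h k (τ b) = y a + y b} := by
          simp only [hT, hlt, if_false]
          ext k
          simp only [Set.mem_setOf_eq]
          exact key_iff hadd _ _ _ _
        rw [this]
        exact hxu _ _ hτ _
  calc 2 ^ n * Set.ncard {k' : K | ∃ a b, 1 ≤ a ∧ a ≤ j ∧ 1 ≤ b ∧ b ≤ j ∧ a ≠ b ∧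
        (x a + h k' (τ a) = x b + h k' (τ b) ∨
          y a + h k' (τ a) = y b + h k' (τ b))}
      ≤ 2 ^ n * (⋃ p ∈ P, T p).ncard := by
        exact Nat.mul_le_mul_left _ (Set.ncard_le_ncard hsub (Set.toFinite _))
    _ ≤ 2 ^ n * ∑ p ∈ P, (T p).ncard := by
        exact Nat.mul_le_mul_left _ (ncard_biUnion_le' P T)
    _ = ∑ p ∈ P, 2 ^ n * (T p).ncard := Finset.mul_sum _ _ _
    _ ≤ ∑ _p ∈ P, Fintype.card K := Finset.sum_le_sum hbound
    _ = P.card * Fintype.card K := by rw [Finset.sum_const, smul_eq_mul]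
    _ ≤ j ^ 2 * Fintype.card K := by
        have : P.card = j * j - j := by
          rw [hP, Finset.offDiag_card, Nat.card_Icc]; simp
        rw [this]
        have : j * j - j ≤ j ^ 2 := by nlinarith [Nat.sub_le (j*j) j]
        exact Nat.mul_le_mul_right _ this
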